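/- For the variable-arity aggregator AggVar, running two complete sessions back to back is equivalent to running them independently: for n, m > 0, running AggVar from the waiting state on the sequence (n, x₁, …, x_n, m, y₁, …, y_m) yields exactly the outputs some (F [x₁,…,x_n]) at position n+1 and some (F [y₁,…,y_m]) at position n+m+2, with none everywhere else, and ends in the waiting state. -/

import Mathlib

/-- The variable-arity aggregator: state is waiting (`Sum.inl ()`) or
collecting a target count with an accumulator (`Sum.inr (n, acc)`). -/
def AggVar {X Y : Type*} (F : List X → Y) (inp : ℕ ⊕ X)
    (s : Unit ⊕ (ℕ × List X)) : Option Y × (Unit ⊕ (ℕ × List X)) :=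
  match s, inp with
  | Sum.inl _, Sum.inl n => if 0 < n then (none, Sum.inr (n, [])) else (none, Sum.inl ())
  | Sum.inl _, Sum.inr _ => (none, Sum.inl ())
  | Sum.inr (n, acc), Sum.inr x =>
      if acc.length + 1 < n then (none, Sum.inr (n, acc ++ [x]))
      else (some (F (acc ++ [x])), Sum.inl ())
  | Sum.inr s', Sum.inl _ => (none, Sum.inr s')

private lemma scanl_append' {α β : Type*} (f : β → α → β) :
    ∀ (l1 l2 : List α) (a : β),
      List.scanl f a (l1 ++ l2)
        = List.scanl f a l1 ++ (List.scanl f (List.foldl f a l1) l2).tail := by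
  intro l1
  induction l1 with
  | nil => intro l2 a; cases l2 <;> simp [List.scanl]
  | cons x t ih => intro l2 a; simp [List.scanl_cons, ih]

private lemma agg_run {X Y : Type*} (F : List X → Y) :
    ∀ (xs acc : List X) (o : Option Y) (k : ℕ), xs ≠ [] → acc.length + xs.length = k →
      (List.scanl
          (fun (p : Option Y × (Unit ⊕ (ℕ × List X))) (i : ℕ ⊕ X) => AggVar F i p.2)
          (o, Sum.inr (k, acc)) (xs.map Sum.inr)).map Prod.fst
        = o :: List.replicate (xs.length - 1) none ++ [some (F (acc ++ xs))] ∧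
      List.foldl
          (fun (p : Option Y × (Unit ⊕ (ℕ × List X))) (i : ℕ ⊕ X) => AggVar F i p.2)
          (o, Sum.inr (k, acc)) (xs.map Sum.inr)
        = (some (F (acc ++ xs)), Sum.inl ()) := by
  intro xs
  induction xs with
  | nil => simp
  | cons x t ih =>
    intro acc o k _ hk
    cases t with
    | nil =>
      have h : ¬ acc.length + 1 < k := by simp at hk; omega
      simp [List.scanl, AggVar, h]
    | cons y r =>
      have h : acc.length + 1 < k := by simp at hk; omega
      have step1 : AggVar F (Sum.inr x) (Sum.inr (k, acc))
          = (none, Sum.inr (k, acc ++ [x])) := by simp [AggVar, h]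
      have hk' : (acc ++ [x]).length + (y :: r).length = k := by
        simp at hk ⊢; omega
      obtain ⟨ih1, ih2⟩ := ih (acc ++ [x]) none k (by simp) hk'
      constructor
      · rw [show ((x :: y :: r).map Sum.inr) = Sum.inr x :: (y :: r).map Sum.inr from rfl,
          List.scanl_cons, step1, List.map_cons, ih1]
        simp [List.replicate_succ]
      · rw [show ((x :: y :: r).map Sum.inr) = Sum.inr x :: (y :: r).map Sum.inr from rfl,
          List.foldl_cons, step1, ih2, List.append_assoc]
        rfl

theorem stmt_4 {X Y : Type*} (F : List X → Y) (n m : ℕ) (hn : 0 < n) (hm : 0 < m)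
    (xs ys : List X) (hxs : xs.length = n) (hys : ys.length = m) :
    (List.scanl
        (fun (p : Option Y × (Unit ⊕ (ℕ × List X))) (i : ℕ ⊕ X) => AggVar F i p.2)
        (none, Sum.inl ())
        (Sum.inl n :: xs.map Sum.inr ++ Sum.inl m :: ys.map Sum.inr)).map Prod.fst
      = List.replicate (n + 1) none ++ [some (F xs)]
          ++ List.replicate m none ++ [some (F ys)] ∧
    (List.foldl
        (fun (p : Option Y × (Unit ⊕ (ℕ × List X))) (i : ℕ ⊕ X) => AggVar F i p.2)
        (none, Sum.inl ())
        (Sum.inl n :: xs.map Sum.inr ++ Sum.inl m :: ys.map Sum.inr)).2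
      = Sum.inl () := by
  set step := fun (p : Option Y × (Unit ⊕ (ℕ × List X))) (i : ℕ ⊕ X) => AggVar F i p.2
    with hstep
  have hxne : xs ≠ [] := by intro h; rw [h] at hxs; simp at hxs; omega
  have hyne : ys ≠ [] := by intro h; rw [h] at hys; simp at hys; omega
  have s1 : step ((none : Option Y), Sum.inl ()) (Sum.inl n)
      = (none, Sum.inr (n, [])) := by simp [hstep, AggVar, hn]
  obtain ⟨hx1, hx2⟩ := agg_run F xs [] (none : Option Y) n hxne (by simpa using hxs)
  obtain ⟨hy1, hy2⟩ := agg_run F ys [] (none : Option Y) m hyne (by simpa using hys)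
  have s2 : ∀ o : Option Y, step (o, Sum.inl ()) (Sum.inl m)
      = (none, Sum.inr (m, [])) := by intro o; simp [hstep, AggVar, hm]
  obtain ⟨n', rfl⟩ : ∃ n', n = n' + 1 := ⟨n - 1, by omega⟩
  obtain ⟨m', rfl⟩ : ∃ m', m = m' + 1 := ⟨m - 1, by omega⟩
  constructor
  · rw [List.cons_append, List.scanl_cons, s1, scanl_append' step, hx2]
    rw [List.scanl_cons, s2]
    simp [hstep, hx1, hy1, hxs, hys, List.replicate_succ]
  · rw [List.cons_append, List.foldl_cons, s1, List.foldl_append, hx2,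
      List.foldl_cons, s2, hy2]
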